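/- Let g_b, g_f be symmetric positive definite, B_b, B_f skew-symmetric, B_m arbitrary, and let B̃ be the T-dual 2-form defined by B̃_f = -g_f⁻¹B_f(g_f - B_f g_f⁻¹B_f)⁻¹, B̃_m = -B_m B̃_f, B̃_b = B_b - B̃_m B_mᵀ. Then B̃ is invertible if and only if both B_b and B_f are invertible. -/
import Mathlib


open Matrix

theorem Tdual_Bfield_invertible_iff {m k : ℕ}
    (gb : Matrix (Fin m) (Fin m) ℝ) (gf : Matrix (Fin k) (Fin k) ℝ)
    (Bb : Matrix (Fin m) (Fin m) ℝ) (Bf : Matrix (Fin k) (Fin k) ℝ)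
    (Bm : Matrix (Fin m) (Fin k) ℝ)
    (hgb : gb.PosDef) (hgf : gf.PosDef)
    (hBb : Bbᵀ = -Bb) (hBf : Bfᵀ = -Bf) :
    let Btf : Matrix (Fin k) (Fin k) ℝ := -(gf⁻¹ * Bf * (gf - Bf * gf⁻¹ * Bf)⁻¹)
    let Btm : Matrix (Fin m) (Fin k) ℝ := -(Bm * Btf)
    let Btb : Matrix (Fin m) (Fin m) ℝ := Bb - Btm * Bmᵀ
    let Bt : Matrix (Fin m ⊕ Fin k) (Fin m ⊕ Fin k) ℝ :=
      Matrix.fromBlocks Btb Btm (-Btmᵀ) Btf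
    IsUnit Bt ↔ IsUnit Bb ∧ IsUnit Bf := by
  intro Btf Btm Btb Bt
  set C : Matrix (Fin k) (Fin k) ℝ := gf - Bf * gf⁻¹ * Bf with hCdef
  -- transposes
  have hgfT : gfᵀ = gf := hgf.isHermitian.eq
  have hgbT : gbᵀ = gb := hgb.isHermitian.eq
  -- C is positive definite
  have hugf : IsUnit gf.det := isUnit_iff_ne_zero.mpr hgf.det_pos.ne'
  have hugb : IsUnit gb.det := isUnit_iff_ne_zero.mpr hgb.det_pos.ne'
  have hgfinv : gf * gf⁻¹ = 1 := Matrix.mul_nonsing_inv _ hugf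
  have hgfinv' : gf⁻¹ * gf = 1 := Matrix.nonsing_inv_mul _ hugf
  have hgbinv : gb * gb⁻¹ = 1 := Matrix.mul_nonsing_inv _ hugb
  have hgbinv' : gb⁻¹ * gb = 1 := Matrix.nonsing_inv_mul _ hugb
  have hC : C.PosDef := by
    have h1 : C = gf + Bfᵀ * gf⁻¹ * Bf := by
      rw [hBf, hCdef, sub_eq_add_neg, Matrix.neg_mul, Matrix.neg_mul]
    rw [h1]
    have h2 : (Bfᵀ * gf⁻¹ * Bf).PosSemidef := by
      have := (hgf.inv.posSemidef).conjTranspose_mul_mul_same Bf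
      rwa [Matrix.conjTranspose_eq_transpose_of_trivial] at this
    exact hgf.add_posSemidef h2
  have huC : IsUnit C.det := isUnit_iff_ne_zero.mpr hC.det_pos.ne'
  have hCinv : C * C⁻¹ = 1 := Matrix.mul_nonsing_inv _ huC
  have hCinv' : C⁻¹ * C = 1 := Matrix.nonsing_inv_mul _ huC
  have hCT : Cᵀ = C := by
    rw [hCdef]
    simp [Matrix.transpose_sub, Matrix.transpose_mul, Matrix.transpose_nonsing_inv, hBf, hgfT,
      mul_assoc]
  -- commuting relation: C⁻¹ * Bf * gf⁻¹ = gf⁻¹ * Bf * C⁻¹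
  have key : Bf * gf⁻¹ * C = C * (gf⁻¹ * Bf) := by
    rw [hCdef, Matrix.mul_sub, Matrix.sub_mul]
    congr 1
    · rw [mul_assoc Bf, hgfinv', Matrix.mul_one, ← mul_assoc gf, hgfinv, Matrix.one_mul]
    · simp [mul_assoc]
  have hcomm : C⁻¹ * (Bf * gf⁻¹) = (gf⁻¹ * Bf) * C⁻¹ := by
    have k2 : Bf * gf⁻¹ = C * (gf⁻¹ * Bf) * C⁻¹ := by
      rw [← key, Matrix.mul_nonsing_inv_cancel_right _ _ huC]
    rw [k2, ← mul_assoc, ← mul_assoc, hCinv', Matrix.one_mul]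
  -- Btf is skew-symmetric
  have hX : (gf⁻¹ * Bf * C⁻¹)ᵀ = -(gf⁻¹ * Bf * C⁻¹) := by
    rw [Matrix.transpose_mul, Matrix.transpose_mul, Matrix.transpose_nonsing_inv,
      Matrix.transpose_nonsing_inv, hCT, hBf, hgfT, Matrix.neg_mul, Matrix.mul_neg,
      mul_assoc, hcomm, mul_assoc]
  have hskew : Btfᵀ = -Btf := by
    show (-(gf⁻¹ * Bf * C⁻¹))ᵀ = -(-(gf⁻¹ * Bf * C⁻¹))
    rw [Matrix.transpose_neg, hX, neg_neg]
  have hBtmT : Btmᵀ = Btf * Bmᵀ := by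
    show (-(Bm * Btf))ᵀ = Btf * Bmᵀ
    rw [Matrix.transpose_neg, Matrix.transpose_mul, hskew, Matrix.neg_mul, neg_neg]
  have hBtfC : Btf * C = -(gf⁻¹ * Bf) := by
    show -(gf⁻¹ * Bf * C⁻¹) * C = -(gf⁻¹ * Bf)
    rw [Matrix.neg_mul, Matrix.nonsing_inv_mul_cancel_right _ _ huC]
  -- the inverse generalized metric
  set S : Matrix (Fin k) (Fin k) ℝ := C + Bmᵀ * gb⁻¹ * Bm with hSdef
  set G : Matrix (Fin m ⊕ Fin k) (Fin m ⊕ Fin k) ℝ :=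
    Matrix.fromBlocks gb⁻¹ (gb⁻¹ * Bm) (Bmᵀ * gb⁻¹) S with hGdef
  -- key product identity : Bt * G is block upper triangular
  have e11 : Btb * gb⁻¹ + Btm * (Bmᵀ * gb⁻¹) = Bb * gb⁻¹ := by
    show (Bb - Btm * Bmᵀ) * gb⁻¹ + Btm * (Bmᵀ * gb⁻¹) = Bb * gb⁻¹
    rw [Matrix.sub_mul, Matrix.mul_assoc Btm]
    abel
  have e21 : -Btmᵀ * gb⁻¹ + Btf * (Bmᵀ * gb⁻¹) = 0 := by
    rw [hBtmT, Matrix.neg_mul, Matrix.mul_assoc, neg_add_cancel]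
  have e22 : -Btmᵀ * (gb⁻¹ * Bm) + Btf * S = -(gf⁻¹ * Bf) := by
    rw [hBtmT, hSdef, Matrix.mul_add, hBtfC]
    simp only [Matrix.neg_mul, Matrix.mul_assoc]
    abel
  have hprod : Bt * G = Matrix.fromBlocks (Bb * gb⁻¹)
      (Btb * (gb⁻¹ * Bm) + Btm * S) 0 (-(gf⁻¹ * Bf)) := by
    show Matrix.fromBlocks Btb Btm (-Btmᵀ) Btf *
        Matrix.fromBlocks gb⁻¹ (gb⁻¹ * Bm) (Bmᵀ * gb⁻¹) S = _
    rw [Matrix.fromBlocks_multiply, e11, e21, e22]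
  -- determinant of G
  have hgbinvdet : gb⁻¹.det ≠ 0 := by
    rw [Matrix.det_nonsing_inv, Ring.inverse_eq_inv']
    exact inv_ne_zero hugb.ne_zero
  have hCdetne : C.det ≠ 0 := huC.ne_zero
  have hdetG : G.det = gb⁻¹.det * C.det := by
    haveI : Invertible gb⁻¹ := (gb⁻¹).invertibleOfIsUnitDet (isUnit_iff_ne_zero.mpr hgbinvdet)
    rw [hGdef, Matrix.det_fromBlocks₁₁]
    congr 2
    rw [Matrix.invOf_eq_nonsing_inv, Matrix.nonsing_inv_nonsing_inv _ hugb,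
      Matrix.nonsing_inv_mul_cancel_right _ _ hugb, hSdef, ← Matrix.mul_assoc, add_sub_cancel_right]
  have hgfinvdet : gf⁻¹.det ≠ 0 := by
    rw [Matrix.det_nonsing_inv, Ring.inverse_eq_inv']
    exact inv_ne_zero hugf.ne_zero
  -- determinant identity
  have hdet : Bt.det * (gb⁻¹.det * C.det) =
      Bb.det * gb⁻¹.det * ((-1) ^ k * (gf⁻¹.det * Bf.det)) := by
    rw [← hdetG, ← Matrix.det_mul, hprod, Matrix.det_fromBlocks_zero₂₁, Matrix.det_mul,
      Matrix.det_neg, Matrix.det_mul, Fintype.card_fin]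
  have hBtdet : Bt.det * C.det = Bb.det * Bf.det * ((-1) ^ k * gf⁻¹.det) := by
    apply mul_right_cancel₀ hgbinvdet
    linear_combination hdet
  rw [Matrix.isUnit_iff_isUnit_det, Matrix.isUnit_iff_isUnit_det, Matrix.isUnit_iff_isUnit_det,
    isUnit_iff_ne_zero, isUnit_iff_ne_zero, isUnit_iff_ne_zero]
  constructor
  · intro h
    have h2 : Bt.det * C.det ≠ 0 := mul_ne_zero h hCdetne
    rw [hBtdet] at h2
    have h3 := (mul_ne_zero_iff.mp h2).1
    exact ⟨(mul_ne_zero_iff.mp h3).1, (mul_ne_zero_iff.mp h3).2⟩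
  · rintro ⟨h1, h2⟩
    have h3 : Bt.det * C.det ≠ 0 := by
      rw [hBtdet]
      exact mul_ne_zero (mul_ne_zero h1 h2)
        (mul_ne_zero (pow_ne_zero _ (by norm_num)) hgfinvdet)
    exact fun h0 => h3 (by rw [h0, zero_mul])
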